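/- Let n, k, p be natural numbers with n ≥ 2k and 1 ≤ p ≤ k. For all a, b in F(n,k) one has ⟨s_[p] a, s_[p] b⟩ = Σ_{q=0}^{p} C(n−2k, p−q)·⟨s†_[q] a, s†_[q] b⟩, where the inner product on the left is taken in F(n,k+p), the inner product in the q-th summand is taken in F(n,k−q), s†_[0] is the identity, and C(·,·) denotes the ordinary binomial coefficient. -/
import Mathlib


/-- `FSub n k` is the real vector space of real-valued functions on the collection of
`k`-element subsets of `Fin n`. -/
abbrev FSub (n k : ℕ) : Type := {S : Finset (Fin n) // S.card = k} → ℝ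

/-- The iterated up operator `s_[p] : F(n,k) → F(n,k+p)`,
`(s_[p] a)(T) = Σ_{S ⊆ T, |S| = k} a(S)` for every `(k+p)`-element subset `T`. -/
noncomputable def upIter (n k p : ℕ) (a : FSub n k) : FSub n (k + p) := fun T =>
  ∑ S : {S : Finset (Fin n) // S.card = k}, if S.1 ⊆ T.1 then a S else 0

/-- The iterated down operator `s†_[p] : F(n,k) → F(n,k−p)`,
`(s†_[p] a)(S) = Σ_{T ⊇ S, |T| = k} a(T)` for every `(k−p)`-element subset `S`;
`s†_[0]` is the identity. -/
noncomputable def downIter (n k p : ℕ) (a : FSub n k) : FSub n (k - p) := fun S =>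
  ∑ T : {T : Finset (Fin n) // T.card = k}, if S.1 ⊆ T.1 then a T else 0

/-- The standard inner product on `F(n,k)`: `⟨a,b⟩ = Σ_S a(S)·b(S)`. -/
noncomputable def ip (n k : ℕ) (a b : FSub n k) : ℝ :=
  ∑ S : {S : Finset (Fin n) // S.card = k}, a S * b S


lemma key_choose (m j k p : ℕ) (hj : j ≤ k) (hp : p ≤ k) :
    (if k ≤ p + j then (m + j).choose (p + j - k) else 0)
      = ∑ q ∈ Finset.range (p + 1), m.choose (p - q) * j.choose (k - q) := by
  split_ifs with h
  · set t := p + j - k with ht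
    have h1 : ∑ q ∈ Finset.range (p + 1), m.choose (p - q) * j.choose (k - q)
        = ∑ q ∈ Finset.Ico (k - j) (p + 1), m.choose (p - q) * j.choose (k - q) := by
      rw [Finset.range_eq_Ico]
      refine (Finset.sum_subset (Finset.Ico_subset_Ico (by omega) le_rfl) ?_).symm
      intro q hq hq'
      simp only [Finset.mem_Ico] at hq hq'
      have : j < k - q := by omega
      rw [Nat.choose_eq_zero_of_lt this, mul_zero]
    rw [h1, Finset.sum_Ico_eq_sum_range]
    have h2 : p + 1 - (k - j) = t + 1 := by omega
    rw [h2, show m + j = j + m from add_comm m j, Nat.add_choose_eq,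
      Finset.Nat.sum_antidiagonal_eq_sum_range_succ_mk]
    refine Finset.sum_congr rfl fun i hi => ?_
    simp only [Finset.mem_range] at hi
    have hij : i ≤ j := by omega
    rw [show p - (k - j + i) = t - i by omega, show k - (k - j + i) = j - i by omega,
      Nat.choose_symm hij, mul_comm]
  · refine (Finset.sum_eq_zero fun q hq => ?_).symm
    simp only [Finset.mem_range] at hq
    have : j < k - q := by omega
    rw [Nat.choose_eq_zero_of_lt this, mul_zero]

lemma card_filter_subsets (n r : ℕ) (A : Finset (Fin n)) :
    (Finset.univ.filter fun U : {U : Finset (Fin n) // U.card = r} => U.1 ⊆ A).card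
      = A.card.choose r := by
  rw [← Finset.card_powersetCard r A]
  apply Finset.card_bij (fun U _ => U.1)
  · intro U hU
    simp only [Finset.mem_filter] at hU
    simp [Finset.mem_powersetCard, hU.2, U.2]
  · intro U _ V _ h
    exact Subtype.ext h
  · intro B hB
    rw [Finset.mem_powersetCard] at hB
    exact ⟨⟨B, hB.2⟩, Finset.mem_filter.2 ⟨Finset.mem_univ _, hB.1⟩, rfl⟩

lemma card_filter_supersets (n t : ℕ) (A : Finset (Fin n)) (h : A.card ≤ t) :
    (Finset.univ.filter fun T : {T : Finset (Fin n) // T.card = t} => A ⊆ T.1).card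
      = (n - A.card).choose (t - A.card) := by
  have hc : (Aᶜ).card = n - A.card := by
    simp [Finset.card_compl]
  rw [← hc, ← Finset.card_powersetCard (t - A.card) Aᶜ]
  apply Finset.card_bij (fun T _ => T.1 \ A)
  · intro T hT
    simp only [Finset.mem_filter] at hT
    rw [Finset.mem_powersetCard]
    refine ⟨fun x hx => ?_, ?_⟩
    · simp only [Finset.mem_sdiff] at hx
      simp [hx.2]
    · rw [Finset.card_sdiff_of_subset hT.2, T.2]
  · intro T hT T' hT' hEq
    simp only [Finset.mem_filter] at hT hT'
    apply Subtype.ext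
    have h2 : T.1 \ A ∪ A = T'.1 \ A ∪ A := by rw [hEq]
    rwa [Finset.sdiff_union_of_subset hT.2, Finset.sdiff_union_of_subset hT'.2] at h2
  · intro B hB
    rw [Finset.mem_powersetCard] at hB
    have hdisj : Disjoint B A := by
      rw [Finset.disjoint_left]
      intro x hx
      have := hB.1 hx
      simpa using this
    have hcard : (B ∪ A).card = t := by
      rw [Finset.card_union_of_disjoint hdisj, hB.2]
      omega
    refine ⟨⟨B ∪ A, hcard⟩, Finset.mem_filter.2 ⟨Finset.mem_univ _, Finset.subset_union_right⟩, ?_⟩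
    rw [Finset.union_sdiff_right, Finset.sdiff_eq_self_of_disjoint hdisj]

lemma card_filter_supersets_zero (n t : ℕ) (A : Finset (Fin n)) (h : t < A.card) :
    (Finset.univ.filter fun T : {T : Finset (Fin n) // T.card = t} => A ⊆ T.1).card = 0 := by
  rw [Finset.card_eq_zero, Finset.filter_eq_empty_iff]
  intro T _ hsub
  have := Finset.card_le_card hsub
  rw [T.2] at this
  omega

lemma pair_identity (n k p : ℕ) (hn : 2 * k ≤ n) (hpk : p ≤ k)
    (S S' : {S : Finset (Fin n) // S.card = k}) :
    ((Finset.univ.filter fun T : {T : Finset (Fin n) // T.card = k + p} =>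
        S.1 ∪ S'.1 ⊆ T.1).card : ℝ)
      = ∑ q ∈ Finset.range (p + 1), ((n - 2 * k).choose (p - q) : ℝ) *
          ((Finset.univ.filter fun U : {U : Finset (Fin n) // U.card = k - q} =>
              U.1 ⊆ S.1 ∩ S'.1).card : ℝ) := by
  have hj : (S.1 ∩ S'.1).card ≤ k := by
    have := Finset.card_le_card (Finset.inter_subset_left : S.1 ∩ S'.1 ⊆ S.1)
    rw [S.2] at this; exact this
  set j := (S.1 ∩ S'.1).card with hjdef
  have hu : (S.1 ∪ S'.1).card = 2 * k - j := by
    have := Finset.card_union_add_card_inter S.1 S'.1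
    rw [S.2, S'.2, ← hjdef] at this
    omega
  have hnat : (Finset.univ.filter fun T : {T : Finset (Fin n) // T.card = k + p} =>
        S.1 ∪ S'.1 ⊆ T.1).card
      = ∑ q ∈ Finset.range (p + 1), (n - 2 * k).choose (p - q) * j.choose (k - q) := by
    rw [← key_choose (n - 2 * k) j k p hj hpk]
    split_ifs with h
    · rw [card_filter_supersets n (k + p) _ (by omega : (S.1 ∪ S'.1).card ≤ k + p), hu]
      congr 1 <;> omega
    · exact card_filter_supersets_zero n (k + p) _ (by omega)
  calc ((Finset.univ.filter fun T : {T : Finset (Fin n) // T.card = k + p} =>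
        S.1 ∪ S'.1 ⊆ T.1).card : ℝ)
      = ((∑ q ∈ Finset.range (p + 1), (n - 2 * k).choose (p - q) * j.choose (k - q) : ℕ) : ℝ) := by
        rw [hnat]
    _ = _ := by
        push_cast
        refine Finset.sum_congr rfl fun q _ => ?_
        rw [card_filter_subsets n (k - q) (S.1 ∩ S'.1), ← hjdef]

/-- For `n ≥ 2k` and `1 ≤ p ≤ k`, for all `a, b ∈ F(n,k)`:
`⟨s_[p] a, s_[p] b⟩ = Σ_{q=0}^{p} C(n−2k, p−q)·⟨s†_[q] a, s†_[q] b⟩`. -/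
theorem upIter_inner_eq_sum_downIter (n k p : ℕ) (hn : 2 * k ≤ n) (hp1 : 1 ≤ p)
    (hpk : p ≤ k) (a b : FSub n k) :
    ip n (k + p) (upIter n k p a) (upIter n k p b) =
      ∑ q ∈ Finset.range (p + 1),
        (Nat.choose (n - 2 * k) (p - q) : ℝ) *
          ip n (k - q) (downIter n k q a) (downIter n k q b) := by
  have lhs : ip n (k + p) (upIter n k p a) (upIter n k p b)
      = ∑ S : {S : Finset (Fin n) // S.card = k}, ∑ S' : {S : Finset (Fin n) // S.card = k},
          a S * b S' * ((Finset.univ.filter fun T : {T : Finset (Fin n) // T.card = k + p} =>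
              S.1 ∪ S'.1 ⊆ T.1).card : ℝ) := by
    unfold ip upIter
    simp_rw [Finset.sum_mul_sum]
    conv_lhs => rw [Finset.sum_comm]
    refine Finset.sum_congr rfl fun S _ => ?_
    conv_lhs => rw [Finset.sum_comm]
    refine Finset.sum_congr rfl fun S' _ => ?_
    have hterm : ∀ T : {T : Finset (Fin n) // T.card = k + p},
        (if S.1 ⊆ T.1 then a S else 0) * (if S'.1 ⊆ T.1 then b S' else 0)
          = if S.1 ∪ S'.1 ⊆ T.1 then a S * b S' else 0 := by
      intro T
      by_cases h1 : S.1 ⊆ T.1 <;> by_cases h2 : S'.1 ⊆ T.1 <;>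
        simp [h1, h2, Finset.union_subset_iff]
    simp_rw [hterm]
    rw [← Finset.sum_filter, Finset.sum_const, nsmul_eq_mul, mul_comm]
  have rhs : ∀ q, ip n (k - q) (downIter n k q a) (downIter n k q b)
      = ∑ S : {S : Finset (Fin n) // S.card = k}, ∑ S' : {S : Finset (Fin n) // S.card = k},
          a S * b S' * ((Finset.univ.filter fun U : {U : Finset (Fin n) // U.card = k - q} =>
              U.1 ⊆ S.1 ∩ S'.1).card : ℝ) := by
    intro q
    unfold ip downIter
    simp_rw [Finset.sum_mul_sum]
    conv_lhs => rw [Finset.sum_comm]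
    refine Finset.sum_congr rfl fun S _ => ?_
    conv_lhs => rw [Finset.sum_comm]
    refine Finset.sum_congr rfl fun S' _ => ?_
    have hterm : ∀ U : {U : Finset (Fin n) // U.card = k - q},
        (if U.1 ⊆ S.1 then a S else 0) * (if U.1 ⊆ S'.1 then b S' else 0)
          = if U.1 ⊆ S.1 ∩ S'.1 then a S * b S' else 0 := by
      intro U
      by_cases h1 : U.1 ⊆ S.1 <;> by_cases h2 : U.1 ⊆ S'.1 <;>
        simp [h1, h2, Finset.subset_inter_iff]
    simp_rw [hterm]
    rw [← Finset.sum_filter, Finset.sum_const, nsmul_eq_mul, mul_comm]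
  have hrhs : ∑ q ∈ Finset.range (p + 1),
        (Nat.choose (n - 2 * k) (p - q) : ℝ) *
          ip n (k - q) (downIter n k q a) (downIter n k q b)
      = ∑ S : {S : Finset (Fin n) // S.card = k}, ∑ S' : {S : Finset (Fin n) // S.card = k},
          ∑ q ∈ Finset.range (p + 1), (Nat.choose (n - 2 * k) (p - q) : ℝ) *
            (a S * b S' * ((Finset.univ.filter fun U : {U : Finset (Fin n) // U.card = k - q} =>
              U.1 ⊆ S.1 ∩ S'.1).card : ℝ)) := by
    simp_rw [rhs, Finset.mul_sum]
    conv_lhs => rw [Finset.sum_comm]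
    refine Finset.sum_congr rfl fun S _ => ?_
    conv_lhs => rw [Finset.sum_comm]
  rw [lhs, hrhs]
  refine Finset.sum_congr rfl fun S _ => Finset.sum_congr rfl fun S' _ => ?_
  rw [pair_identity n k p hn hpk S S', Finset.mul_sum]
  refine Finset.sum_congr rfl fun q _ => ?_
  ring
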